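/- Every maximal planar graph on at least 4 vertices is 3-connected. -/

import Mathlib

set_option linter.unusedSectionVars false
set_option maxHeartbeats 1000000

section Aux2
variable {V D : Type} [Fintype V] [Fintype D]
variable (α : Equiv.Perm D) (vtx : D → V)

/-- the underlying simple graph -/
def Gr : SimpleGraph V := SimpleGraph.fromRel (fun a b => ∃ d, vtx d = a ∧ vtx (α d) = b)

/-- reachability avoiding the set `S` -/
def ReachS (S : Set V) (a b : V) : Prop :=
  Relation.ReflTransGen (fun x y => x ∉ S ∧ y ∉ S ∧ (Gr α vtx).Adj x y) a b

variable {α vtx} {σ : Equiv.Perm D}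

lemma reachS_symm {S : Set V} {a b : V} (h : ReachS α vtx S a b) : ReachS α vtx S b a := by
  refine (@Relation.ReflTransGen.symmetric _ _ ⟨?_⟩).symm _ _ h
  rintro x y ⟨hx, hy, hadj⟩
  exact ⟨hy, hx, hadj.symm⟩

lemma vtx_pow (hvσ : ∀ d, vtx (σ d) = vtx d) (n : ℕ) (d : D) :
    vtx ((σ ^ n) d) = vtx d := by
  induction n with
  | zero => rfl
  | succ k ih => rw [pow_succ', Equiv.Perm.mul_apply, hvσ, ih]

lemma vtx_inv (hvσ : ∀ d, vtx (σ d) = vtx d) (d : D) :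
    vtx (σ⁻¹ d) = vtx d := by
  conv_rhs => rw [← (show σ (σ⁻¹ d) = d from Equiv.apply_symm_apply σ d), hvσ]

/-- σ has no fixed points. -/
lemma sigma_nofix (hinv : ∀ d, α (α d) = d)
    (hvσ : ∀ d, vtx (σ d) = vtx d)
    (htri : ∀ d : D, ((σ * α) ^ 3) d = d ∧ (σ * α) d ≠ d)
    (hnoloop : ∀ d : D, vtx (α d) ≠ vtx d) (d : D) : σ d ≠ d := by
  intro hfix
  have h3 := (htri (α d)).1
  have h : σ (α (σ (α (σ (α (α d)))))) = α d := by
    simpa [pow_succ, Equiv.Perm.mul_apply] using h3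
  rw [hinv, hfix] at h
  have h4 : α (σ (α d)) = σ⁻¹ (α d) := by
    have := congrArg (⇑σ⁻¹) h
    simpa using this
  have h5 : vtx (α (σ (α d))) = vtx (σ (α d)) := by
    rw [h4, vtx_inv hvσ, ← hvσ (α d)]
  exact hnoloop (σ (α d)) h5

/-- the triangle face gives an edge between `vtx (α (σ d))` and `vtx (α d)` -/
lemma step_edge (hinv : ∀ d, α (α d) = d)
    (hvσ : ∀ d, vtx (σ d) = vtx d)
    (htri : ∀ d : D, ((σ * α) ^ 3) d = d ∧ (σ * α) d ≠ d) (d : D) :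
    ∃ f, vtx f = vtx (α (σ d)) ∧ vtx (α f) = vtx (α d) := by
  have h3 := (htri (α d)).1
  have h : σ (α (σ (α (σ (α (α d)))))) = α d := by
    simpa [pow_succ, Equiv.Perm.mul_apply] using h3
  rw [hinv] at h
  refine ⟨σ (α (σ d)), by rw [hvσ], ?_⟩
  have h4 : α (σ (α (σ d))) = σ⁻¹ (α d) := by
    have := congrArg (⇑σ⁻¹) h
    simpa using this
  rw [h4, vtx_inv hvσ]

lemma step_reach (hinv : ∀ d, α (α d) = d)
    (hvσ : ∀ d, vtx (σ d) = vtx d)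
    (htri : ∀ d : D, ((σ * α) ^ 3) d = d ∧ (σ * α) d ≠ d)
    {S : Set V} {d : D} (h1 : vtx (α d) ∉ S) (h2 : vtx (α (σ d)) ∉ S) :
    ReachS α vtx S (vtx (α d)) (vtx (α (σ d))) := by
  by_cases heq : vtx (α d) = vtx (α (σ d))
  · rw [heq]; exact Relation.ReflTransGen.refl
  · obtain ⟨f, hf1, hf2⟩ := step_edge hinv hvσ htri d
    refine Relation.ReflTransGen.single ⟨h1, h2, ?_⟩
    show (SimpleGraph.fromRel _).Adj _ _
    rw [SimpleGraph.fromRel_adj]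
    exact ⟨heq, Or.inr ⟨f, hf1, hf2⟩⟩

lemma chain_reach (hinv : ∀ d, α (α d) = d)
    (hvσ : ∀ d, vtx (σ d) = vtx d)
    (htri : ∀ d : D, ((σ * α) ^ 3) d = d ∧ (σ * α) d ≠ d)
    {S : Set V} (d : D) :
    ∀ j : ℕ, (∀ k ≤ j, vtx (α ((σ ^ k) d)) ∉ S) →
      ReachS α vtx S (vtx (α d)) (vtx (α ((σ ^ j) d))) := by
  intro j
  induction j with
  | zero => intro _; rw [pow_zero]; exact Relation.ReflTransGen.refl
  | succ k ih =>
    intro hall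
    have h1 := ih (fun i hi => hall i (Nat.le_succ_of_le hi))
    have h2 : ReachS α vtx S (vtx (α ((σ ^ k) d))) (vtx (α ((σ ^ (k+1)) d))) := by
      have hps : (σ ^ (k+1)) d = σ ((σ ^ k) d) := by
        rw [pow_succ', Equiv.Perm.mul_apply]
      rw [hps]
      exact step_reach hinv hvσ htri (hall k (Nat.le_succ k)) (by
        rw [← hps]; exact hall (k+1) le_rfl)
    exact h1.trans h2

/-- The link lemma. -/
lemma link_reach (hinv : ∀ d, α (α d) = d)
    (hvσ : ∀ d, vtx (σ d) = vtx d)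
    (hfib : ∀ d e, vtx d = vtx e → ∃ n : ℕ, (σ ^ n) d = e)
    (htri : ∀ d : D, ((σ * α) ^ 3) d = d ∧ (σ * α) d ≠ d)
    (hnoloop : ∀ d : D, vtx (α d) ≠ vtx d)
    (hsimple : ∀ d e : D, vtx d = vtx e → vtx (α d) = vtx (α e) → e = d)
    {S : Set V} {v : V} {d e : D}
    (hSsub : ∀ s ∈ S, s = vtx d ∨ s = v)
    (hde : vtx d = vtx e)
    (hdS : vtx (α d) ∉ S) (heS : vtx (α e) ∉ S) :
    ReachS α vtx S (vtx (α d)) (vtx (α e)) := by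
  obtain ⟨n, hne⟩ := hfib d e hde
  set m := Function.minimalPeriod (⇑σ) d with hm
  have hper : Function.IsPeriodicPt (⇑σ) (orderOf σ) d := by
    show (⇑σ)^[orderOf σ] d = d
    show (σ ^ orderOf σ) d = d
    rw [pow_orderOf_eq_one]; rfl
  have hm_pos : 0 < m := hper.minimalPeriod_pos (orderOf_pos σ)
  have hmd : (σ ^ m) d = d := Function.iterate_minimalPeriod (f := ⇑σ) (x := d)
  have hn'e : (σ ^ (n % m)) d = e := by
    rw [← hne]
    exact Function.iterate_mod_minimalPeriod_eq (f := ⇑σ) (n := n) (x := d)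
  set n' := n % m with hn'
  have hn'm : n' < m := Nat.mod_lt _ hm_pos
  have key : ∀ k₁ k₂ : ℕ, k₁ ≤ k₂ → k₂ < m → (σ ^ k₂) d = (σ ^ k₁) d → k₂ = k₁ := by
    intro k₁ k₂ hle hlt h
    by_contra hne2
    have h0 : 0 < k₂ - k₁ := by omega
    have hdd : (σ ^ (k₂ - k₁)) d = d := by
      have h1 : (σ ^ k₁) ((σ ^ (k₂ - k₁)) d) = (σ ^ k₁) d := by
        rw [← Equiv.Perm.mul_apply, ← pow_add]
        rw [show k₁ + (k₂ - k₁) = k₂ by omega, h]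
      exact (σ ^ k₁).injective h1
    have hml : m ≤ k₂ - k₁ :=
      Function.IsPeriodicPt.minimalPeriod_le h0 (show (⇑σ)^[k₂ - k₁] d = d from hdd)
    omega
  have huniq : ∀ k₁ k₂ : ℕ, k₁ < m → k₂ < m → vtx (α ((σ ^ k₁) d)) ∈ S →
      vtx (α ((σ ^ k₂) d)) ∈ S → k₁ = k₂ := by
    intro k₁ k₂ h1 h2 hb1 hb2
    have hv1 : vtx (α ((σ ^ k₁) d)) = v := by
      rcases hSsub _ hb1 with h | h
      · exact absurd (h.trans (vtx_pow hvσ k₁ d).symm) (hnoloop _)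
      · exact h
    have hv2 : vtx (α ((σ ^ k₂) d)) = v := by
      rcases hSsub _ hb2 with h | h
      · exact absurd (h.trans (vtx_pow hvσ k₂ d).symm) (hnoloop _)
      · exact h
    have hdarts : (σ ^ k₂) d = (σ ^ k₁) d :=
      hsimple _ _ ((vtx_pow hvσ k₁ d).trans (vtx_pow hvσ k₂ d).symm)
        (hv1.trans hv2.symm)
    rcases le_total k₁ k₂ with hle | hle
    · exact (key k₁ k₂ hle h2 hdarts).symm
    · exact key k₂ k₁ hle h1 hdarts.symm
  by_cases hA : ∀ k ≤ n', vtx (α ((σ ^ k) d)) ∉ S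
  · rw [← hn'e]
    exact chain_reach hinv hvσ htri d n' hA
  · push_neg at hA
    obtain ⟨k₀, hk₀le, hk₀bad⟩ := hA
    have hk₀m : k₀ < m := lt_of_le_of_lt hk₀le hn'm
    have hchain : ∀ k ≤ m - n', vtx (α ((σ ^ k) e)) ∉ S := by
      intro k hk hbad
      have hke : (σ ^ k) e = (σ ^ (k + n')) d := by
        rw [← hn'e, ← Equiv.Perm.mul_apply, ← pow_add]
      rw [hke] at hbad
      rcases Nat.lt_or_ge (k + n') m with hlt | hge
      · have := huniq (k + n') k₀ hlt hk₀m hbad hk₀bad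
        have hk0 : k = 0 := by omega
        rw [hk0] at hbad
        simp only [zero_add] at hbad
        rw [hn'e] at hbad
        exact heS hbad
      · have hkm : k + n' = m := by omega
        rw [hkm, hmd] at hbad
        exact hdS hbad
    have hch := chain_reach hinv hvσ htri e (m - n') hchain
    have hback : (σ ^ (m - n')) e = d := by
      rw [← hn'e, ← Equiv.Perm.mul_apply, ← pow_add,
        show m - n' + n' = m by omega, hmd]
    rw [hback] at hch
    exact reachS_symm hch

/-- common neighbor of the two endpoints of an edge, distinct from both -/
lemma common_neighbor (hinv : ∀ d, α (α d) = d)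
    (hvσ : ∀ d, vtx (σ d) = vtx d)
    (htri : ∀ d : D, ((σ * α) ^ 3) d = d ∧ (σ * α) d ≠ d)
    (hnoloop : ∀ d : D, vtx (α d) ≠ vtx d)
    (hsimple : ∀ d e : D, vtx d = vtx e → vtx (α d) = vtx (α e) → e = d)
    (d₀ : D) :
    ∃ w : V, w ≠ vtx d₀ ∧ w ≠ vtx (α d₀) ∧
      (∃ h : D, vtx h = vtx d₀ ∧ vtx (α h) = w) ∧
      (∃ g : D, vtx g = vtx (α d₀) ∧ vtx (α g) = w) := by
  set g := σ (α d₀) with hg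
  refine ⟨vtx (α g), ?_, ?_, ?_, ⟨g, by rw [hg, hvσ], rfl⟩⟩
  · -- w ≠ vtx d₀
    intro hwu
    have hgv : vtx g = vtx (α d₀) := by rw [hg, hvσ]
    have : g = α d₀ := by
      refine hsimple (α d₀) g hgv.symm ?_
      rw [hinv, hwu]
    exact sigma_nofix hinv hvσ htri hnoloop (α d₀) (hg ▸ this)
  · -- w ≠ vtx (α d₀)
    intro hwv
    exact hnoloop g (by rw [hwv, hg, hvσ])
  · -- dart at vtx d₀ towards w
    have h3 := (htri d₀).1
    have h : σ (α (σ (α (σ (α d₀))))) = d₀ := by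
      simpa [pow_succ, Equiv.Perm.mul_apply] using h3
    set h' := σ (α g) with hh'
    have hα : α h' = σ⁻¹ d₀ := by
      have := congrArg (⇑σ⁻¹) h
      simpa [hh', hg] using this
    refine ⟨α h', ?_, ?_⟩
    · rw [hα, vtx_inv hvσ]
    · rw [hinv, hh', hvσ]

end Aux2

/-- Every maximal planar graph on at least 4 vertices is 3-connected. -/
theorem stmt9 (V D : Type) [Fintype V] [Fintype D]
    (σ α : Equiv.Perm D) (vtx : D → V)
    (hinv : ∀ d, α (α d) = d) (hnf : ∀ d, α d ≠ d)
    (hvσ : ∀ d, vtx (σ d) = vtx d)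
    (hsurj : Function.Surjective vtx)
    (hfib : ∀ d e, vtx d = vtx e → ∃ n : ℕ, (σ ^ n) d = e)
    (hconn : ∀ d e : D, Relation.ReflTransGen (fun a b => σ a = b ∨ α a = b) d e)
    (heuler : (Fintype.card V : ℤ)
        - (Nat.card (Quot (fun a b : D => α a = b)) : ℤ)
        + (Nat.card (Quot (fun a b : D => (σ * α) a = b)) : ℤ) = 2)
    (htri : ∀ d : D, ((σ * α) ^ 3) d = d ∧ (σ * α) d ≠ d)
    (hnoloop : ∀ d : D, vtx (α d) ≠ vtx d)
    (hsimple : ∀ d e : D, vtx d = vtx e → vtx (α d) = vtx (α e) → e = d)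
    (hn : 4 ≤ Fintype.card V) :
    ∀ S : Set V, S.ncard ≤ 2 →
      ((SimpleGraph.fromRel (fun a b => ∃ d, vtx d = a ∧ vtx (α d) = b)).induce
        Sᶜ).Connected := by
  intro S hS
  -- extracting a dart from an adjacency
  have getdart : ∀ {a b : V}, (Gr α vtx).Adj a b → ∃ d, vtx d = b ∧ vtx (α d) = a := by
    intro a b hab
    rw [show Gr α vtx = SimpleGraph.fromRel _ from rfl, SimpleGraph.fromRel_adj] at hab
    rcases hab.2 with ⟨d, hd1, hd2⟩ | ⟨d, hd1, hd2⟩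
    · exact ⟨α d, hd2, by rw [hinv, hd1]⟩
    · exact ⟨d, hd1, hd2⟩
  -- overall connectivity on vertices
  have dartconn : ∀ d e : D, Relation.ReflTransGen ((Gr α vtx).Adj) (vtx d) (vtx e) := by
    intro d e
    have h := hconn d e
    induction h with
    | refl => exact Relation.ReflTransGen.refl
    | tail h1 h2 ih =>
      rename_i b c
      rcases h2 with h2 | h2
      · rw [← h2, hvσ]; exact ih
      · refine ih.tail ?_
        rw [← h2]
        show (SimpleGraph.fromRel _).Adj _ _
        rw [SimpleGraph.fromRel_adj]
        exact ⟨(hnoloop b).symm, Or.inl ⟨b, rfl, rfl⟩⟩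
  have vconn : ∀ a b : V, Relation.ReflTransGen ((Gr α vtx).Adj) a b := by
    intro a b
    obtain ⟨d, rfl⟩ := hsurj a
    obtain ⟨e, rfl⟩ := hsurj b
    exact dartconn d e
  -- the "other element" of S
  have hother : ∀ z ∈ S, ∃ v', ∀ s ∈ S, s = z ∨ s = v' := by
    intro z hz
    have hkey : ∀ s ∈ S, ∀ t ∈ S, s ≠ z → t ≠ z → s = t := by
      intro s hs t ht hsz htz
      by_contra hst
      have hsub : ({z, s, t} : Set V) ⊆ S := by
        intro x hx
        rcases hx with rfl | rfl | rfl
        · exact hz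
        · exact hs
        · exact ht
      have h3 : ({z, s, t} : Set V).ncard = 3 := by
        rw [Set.ncard_insert_of_notMem (by simp [Ne.symm hsz, Ne.symm htz]),
          Set.ncard_pair hst]
      have := Set.ncard_le_ncard hsub S.toFinite
      omega
    by_cases hex : ∃ t ∈ S, t ≠ z
    · obtain ⟨v', hv'S, hv'z⟩ := hex
      refine ⟨v', fun s hs => ?_⟩
      by_cases hsz : s = z
      · exact Or.inl hsz
      · exact Or.inr (hkey s hs v' hv'S hsz hv'z)
    · push_neg at hex
      exact ⟨z, fun s hs => Or.inl (hex s hs)⟩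
  -- the main rerouting induction
  have main : ∀ y : V, y ∉ S → ∀ z : V, Relation.ReflTransGen ((Gr α vtx).Adj) z y →
      ((z ∉ S → ReachS α vtx S z y) ∧
       (z ∈ S → ∀ x', x' ∉ S → (Gr α vtx).Adj x' z → ReachS α vtx S x' y)) := by
    intro y hy z hzy
    induction hzy using Relation.ReflTransGen.head_induction_on with
    | refl => exact ⟨fun _ => Relation.ReflTransGen.refl, fun hyS => absurd hyS hy⟩
    | head h1 h2 ih =>
      rename_i z z'
      constructor
      · intro hzS
        by_cases hz'S : z' ∈ S
        · exact ih.2 hz'S z hzS h1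
        · exact (Relation.ReflTransGen.single ⟨hzS, hz'S, h1⟩).trans (ih.1 hz'S)
      · intro hzS x' hx' hx'z
        obtain ⟨v', hSsub⟩ := hother z hzS
        obtain ⟨dx, hdx1, hdx2⟩ := getdart hx'z
        by_cases hz'S : z' ∈ S
        · -- both z and z' removed: go through the common neighbor
          obtain ⟨d₀, hd01, hd02⟩ := getdart h1.symm
          -- d₀ : dart at z towards z'  (vtx d₀ = z, vtx (α d₀) = z')
          obtain ⟨w, hwz, hwz', ⟨hz_dart, hzd1, hzd2⟩, ⟨g, hg1, hg2⟩⟩ :=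
            common_neighbor hinv hvσ htri hnoloop hsimple d₀
          rw [hd01] at hwz hzd1
          rw [hd02] at hwz' hg1
          have hz'v' : z' = v' := by
            rcases hSsub z' hz'S with h | h
            · exact absurd h h1.ne'
            · exact h
          have hwS : w ∉ S := by
            intro hmem
            rcases hSsub w hmem with h | h
            · exact hwz h
            · exact hwz' (h.trans hz'v'.symm)
          have hreach1 : ReachS α vtx S x' w := by
            have := link_reach hinv hvσ hfib htri hnoloop hsimple
              (S := S) (v := v') (d := dx) (e := hz_dart)
              (by rw [hdx1]; exact hSsub) (hdx1.trans hzd1.symm)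
              (by rw [hdx2]; exact hx') (by rw [hzd2]; exact hwS)
            rw [hdx2, hzd2] at this
            exact this
          have hadjwz' : (Gr α vtx).Adj w z' := by
            show (SimpleGraph.fromRel _).Adj _ _
            rw [SimpleGraph.fromRel_adj]
            exact ⟨hwz', Or.inr ⟨g, hg1, hg2⟩⟩
          exact hreach1.trans (ih.2 hz'S w hwS hadjwz')
        · -- only z removed: go around its link
          obtain ⟨d', hd'1, hd'2⟩ := getdart h1.symm
          have hreach1 : ReachS α vtx S x' z' := by
            have := link_reach hinv hvσ hfib htri hnoloop hsimple
              (S := S) (v := v') (d := dx) (e := d')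
              (by rw [hdx1]; exact hSsub) (hdx1.trans hd'1.symm)
              (by rw [hdx2]; exact hx') (by rw [hd'2]; exact hz'S)
            rw [hdx2, hd'2] at this
            exact this
          exact hreach1.trans (ih.1 hz'S)
  -- assembling the final statement
  have hnonempty : ∃ a : V, a ∈ Sᶜ := by
    by_contra hempty
    push_neg at hempty
    have : S = Set.univ := by
      ext x; simp only [Set.mem_univ, iff_true]
      have := hempty x
      simpa using this
    rw [this, Set.ncard_univ, Nat.card_eq_fintype_card] at hS
    omega
  obtain ⟨a₀, ha₀⟩ := hnonempty
  rw [SimpleGraph.connected_iff]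
  refine ⟨?_, ⟨⟨a₀, ha₀⟩⟩⟩
  · rintro ⟨a, ha⟩ ⟨b, hb⟩
    have hreach : ReachS α vtx S a b :=
      (main b hb a (vconn a b)).1 ha
    -- convert to Reachable in the induced graph
    have conv : ∀ p q : V, ReachS α vtx S p q → ∀ (hp : p ∈ Sᶜ) (hq : q ∈ Sᶜ),
        ((Gr α vtx).induce Sᶜ).Reachable ⟨p, hp⟩ ⟨q, hq⟩ := by
      intro p q h
      induction h with
      | refl => intro hp hq; rfl
      | tail h1 h2 ih =>
        intro hp hq
        obtain ⟨hbS, hcS, hadj⟩ := h2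
        refine (ih hp hbS).trans ?_
        exact SimpleGraph.Adj.reachable hadj
    exact conv a b hreach ha hb
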